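/- Let S be a diverse set of triples of N, and let p_S be the partition of N whose parts are the connected components of the graph G_S (where i,j are adjacent iff no triple of S contains both). Then p_S has at least three parts, and the set of triples separated by p_S is exactly S. Conversely, for any partition p of N with at least three parts, the set S_p of triples separated by p is diverse, and the partition determined by the components of G_{S_p} equals p. -/

import Mathlib

open Set

/-- A set `S` of triples (3-element subsets) of `α` is diverse: it is nonempty, all its
elements are triples, and axioms (D1) and (D2) hold. -/
def Diverse {α : Type*} [DecidableEq α] (S : Set (Finset α)) : Prop :=
  S.Nonempty ∧ (∀ t ∈ S, t.card = 3) ∧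
  (∀ i j k l : α, ({i, j, k} : Finset α) ∈ S →
    ({i, j, l} : Finset α) ∈ S ∨ ({i, k, l} : Finset α) ∈ S ∨
      ({j, k, l} : Finset α) ∈ S) ∧
  (∀ a b c x y z : α, ({a, x, y} : Finset α) ∈ S → ({b, y, z} : Finset α) ∈ S →
    ({c, x, z} : Finset α) ∈ S → ({x, y, z} : Finset α) ∈ S)

/-- The graph `G_S` on `α`: `i` and `j` are adjacent iff `i ≠ j` and no triple of `S`
contains both `i` and `j`. -/
def GS {α : Type*} (S : Set (Finset α)) : SimpleGraph α where
  Adj i j := i ≠ j ∧ ∀ t ∈ S, ¬(i ∈ t ∧ j ∈ t)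
  symm := ⟨fun i j ⟨hne, h⟩ => ⟨hne.symm, fun t ht h2 => h t ht ⟨h2.2, h2.1⟩⟩⟩
  loopless := ⟨fun i h => h.1 rfl⟩

/-- A partition `p` of `α` separates the triple `{a,b,c}` if `a`, `b`, `c` lie in three
pairwise distinct parts of `p`. -/
def Separates {α : Type*} (p : Set (Set α)) (a b c : α) : Prop :=
  ∃ A ∈ p, ∃ B ∈ p, ∃ D ∈ p, a ∈ A ∧ b ∈ B ∧ c ∈ D ∧ A ≠ B ∧ A ≠ D ∧ B ≠ D

/-- The partition `p_S` of `α` whose parts are the connected components of `G_S`. -/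
def pS {α : Type*} (S : Set (Finset α)) : Set (Set α) :=
  {A : Set α | ∃ i : α, A = {j : α | (GS S).Reachable i j}}

/-- The set `S_p` of triples separated by a partition `p`. -/
def Sp {α : Type*} [DecidableEq α] (p : Set (Set α)) : Set (Finset α) :=
  {t : Finset α | ∃ i j k : α, i ≠ j ∧ i ≠ k ∧ j ≠ k ∧
    t = ({i, j, k} : Finset α) ∧ Separates p i j k}

section Aux

variable {α : Type*} [DecidableEq α]

/-- `i` and `j` occur together in some triple of `S`. -/
def Rrel (S : Set (Finset α)) (i j : α) : Prop := ∃ t ∈ S, i ∈ t ∧ j ∈ t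

lemma Rrel.symm {S : Set (Finset α)} {i j : α} (h : Rrel S i j) : Rrel S j i := by
  obtain ⟨t, ht, h1, h2⟩ := h; exact ⟨t, ht, h2, h1⟩

/-- Equality-or-never-together relation. -/
def Erel (S : Set (Finset α)) (i j : α) : Prop := i = j ∨ ¬ Rrel S i j

lemma Erel.refl (S : Set (Finset α)) (i : α) : Erel S i i := Or.inl rfl

lemma Erel.symm {S : Set (Finset α)} {i j : α} (h : Erel S i j) : Erel S j i := by
  rcases h with rfl | h
  · exact Or.inl rfl
  · exact Or.inr fun h' => h h'.symm

lemma third_elt {t : Finset α} (ht : t.card = 3) {i k : α} (hi : i ∈ t) (hk : k ∈ t)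
    (hik : i ≠ k) : ∃ m, t = {i, k, m} ∧ m ≠ i ∧ m ≠ k := by
  have hsub : ({i, k} : Finset α) ⊆ t := by
    intro x hx; simp only [Finset.mem_insert, Finset.mem_singleton] at hx
    rcases hx with rfl | rfl <;> assumption
  have hc2 : ({i, k} : Finset α).card = 2 := by
    rw [Finset.card_insert_of_notMem (by simp [hik]), Finset.card_singleton]
  have hsd : (t \ ({i, k} : Finset α)).Nonempty := by
    rw [← Finset.card_pos, Finset.card_sdiff_of_subset hsub]; omega
  obtain ⟨m, hmsd⟩ := hsd
  rw [Finset.mem_sdiff] at hmsd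
  obtain ⟨hmt, hm⟩ := hmsd
  simp only [Finset.mem_insert, Finset.mem_singleton, not_or] at hm
  have hsub2 : ({i, k, m} : Finset α) ⊆ t := by
    intro x hx; simp only [Finset.mem_insert, Finset.mem_singleton] at hx
    rcases hx with rfl | rfl | rfl <;> assumption
  have hc3 : ({i, k, m} : Finset α).card = 3 := by
    rw [Finset.card_insert_of_notMem (by simp [hik, Ne.symm hm.1]),
      Finset.card_insert_of_notMem (by simp [Ne.symm hm.2]), Finset.card_singleton]
  exact ⟨m, (Finset.eq_of_subset_of_card_le hsub2 (by omega)).symm, hm.1, hm.2⟩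

lemma Erel.trans {S : Set (Finset α)} (hS : Diverse S) {i j k : α}
    (h1 : Erel S i j) (h2 : Erel S j k) : Erel S i k := by
  rcases h1 with rfl | hij
  · exact h2
  rcases h2 with rfl | hjk
  · exact Or.inr hij
  by_cases hik : i = k
  · exact Or.inl hik
  right
  rintro ⟨t, htS, hit, hkt⟩
  obtain ⟨m, rfl, _, _⟩ := third_elt (hS.2.1 t htS) hit hkt hik
  obtain h | h | h := hS.2.2.1 i k m j htS
  · exact hij ⟨_, h, by simp, by simp⟩
  · exact hij ⟨_, h, by simp, by simp⟩
  · exact hjk ⟨_, h, by simp, by simp⟩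

lemma adj_iff {S : Set (Finset α)} {i j : α} :
    (GS S).Adj i j ↔ i ≠ j ∧ ¬ Rrel S i j := by
  constructor
  · rintro ⟨h1, h2⟩; exact ⟨h1, fun ⟨t, ht, h⟩ => h2 t ht h⟩
  · rintro ⟨h1, h2⟩; exact ⟨h1, fun t ht h => h2 ⟨t, ht, h⟩⟩

lemma reach_iff {S : Set (Finset α)} (hS : Diverse S) {i j : α} :
    (GS S).Reachable i j ↔ Erel S i j := by
  constructor
  · intro h
    obtain ⟨w⟩ := h
    induction w with
    | nil => exact Erel.refl S _
    | cons h p ih => exact Erel.trans hS (Or.inr (adj_iff.mp h).2) ih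
  · intro h
    rcases h with rfl | h
    · exact SimpleGraph.Reachable.refl _
    by_cases hij : i = j
    · subst hij; exact SimpleGraph.Reachable.refl _
    · exact (adj_iff.mpr ⟨hij, h⟩).reachable

/-- The reachability class. -/
def cls (S : Set (Finset α)) (i : α) : Set α := {j : α | (GS S).Reachable i j}

lemma cls_mem_pS {S : Set (Finset α)} (i : α) : cls S i ∈ pS S := ⟨i, rfl⟩

lemma mem_cls_self {S : Set (Finset α)} (i : α) : i ∈ cls S i :=
  SimpleGraph.Reachable.refl _

lemma cls_eq {S : Set (Finset α)} (hS : Diverse S) {i j : α} (h : Erel S i j) :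
    cls S i = cls S j := by
  ext x
  simp only [cls, Set.mem_setOf_eq, reach_iff hS]
  exact ⟨fun h2 => Erel.trans hS h.symm h2, fun h2 => Erel.trans hS h h2⟩

lemma cls_ne {S : Set (Finset α)} (hS : Diverse S) {i j : α} (h : ¬ Erel S i j) :
    cls S i ≠ cls S j := by
  intro he
  have : j ∈ cls S i := he ▸ mem_cls_self j
  exact h ((reach_iff hS).mp this)

end Aux

section Aux2

variable {α : Type*} [DecidableEq α]

/-- `i` and `j` share a part of `p`. -/
def Qrel (p : Set (Set α)) (i j : α) : Prop := ∃ B ∈ p, i ∈ B ∧ j ∈ B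

lemma Qrel.symm {p : Set (Set α)} {i j : α} (h : Qrel p i j) : Qrel p j i := by
  obtain ⟨B, hB, h1, h2⟩ := h; exact ⟨B, hB, h2, h1⟩

lemma Qrel.refl {p : Set (Set α)} (hp : Setoid.IsPartition p) (i : α) : Qrel p i i := by
  obtain ⟨B, ⟨hBp, hiB⟩, -⟩ := hp.2 i
  exact ⟨B, hBp, hiB, hiB⟩

lemma part_unique {p : Set (Set α)} (hp : Setoid.IsPartition p) {i : α} {B C : Set α}
    (hB : B ∈ p) (hiB : i ∈ B) (hC : C ∈ p) (hiC : i ∈ C) : B = C := by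
  obtain ⟨D, -, hD⟩ := hp.2 i
  rw [hD B ⟨hB, hiB⟩, hD C ⟨hC, hiC⟩]

lemma Qrel.trans {p : Set (Set α)} (hp : Setoid.IsPartition p) {i j k : α}
    (h1 : Qrel p i j) (h2 : Qrel p j k) : Qrel p i k := by
  obtain ⟨B, hB, hi, hj⟩ := h1
  obtain ⟨C, hC, hj', hk⟩ := h2
  exact ⟨B, hB, hi, (part_unique hp hB hj hC hj') ▸ hk⟩

lemma Qrel.ne {p : Set (Set α)} (hp : Setoid.IsPartition p) {i j : α} (h : ¬ Qrel p i j) :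
    i ≠ j := by
  rintro rfl; exact h (Qrel.refl hp i)

lemma sepP_iff {p : Set (Set α)} (hp : Setoid.IsPartition p) {i j k : α} :
    Separates p i j k ↔ ¬ Qrel p i j ∧ ¬ Qrel p i k ∧ ¬ Qrel p j k := by
  constructor
  · rintro ⟨A, hA, B, hB, D, hD, hiA, hjB, hkD, hAB, hAD, hBD⟩
    refine ⟨?_, ?_, ?_⟩
    · rintro ⟨C, hC, hiC, hjC⟩
      exact hAB ((part_unique hp hA hiA hC hiC).trans (part_unique hp hC hjC hB hjB))
    · rintro ⟨C, hC, hiC, hkC⟩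
      exact hAD ((part_unique hp hA hiA hC hiC).trans (part_unique hp hC hkC hD hkD))
    · rintro ⟨C, hC, hjC, hkC⟩
      exact hBD ((part_unique hp hB hjB hC hjC).trans (part_unique hp hC hkC hD hkD))
  · rintro ⟨h1, h2, h3⟩
    obtain ⟨A, ⟨hA, hiA⟩, -⟩ := hp.2 i
    obtain ⟨B, ⟨hB, hjB⟩, -⟩ := hp.2 j
    obtain ⟨D, ⟨hD, hkD⟩, -⟩ := hp.2 k
    refine ⟨A, hA, B, hB, D, hD, hiA, hjB, hkD, ?_, ?_, ?_⟩
    · rintro rfl; exact h1 ⟨A, hA, hiA, hjB⟩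
    · rintro rfl; exact h2 ⟨A, hA, hiA, hkD⟩
    · rintro rfl; exact h3 ⟨B, hB, hjB, hkD⟩

lemma pair_of_mem_Sp {p : Set (Set α)} (hp : Setoid.IsPartition p) {t : Finset α}
    (ht : t ∈ Sp p) {u v : α} (hu : u ∈ t) (hv : v ∈ t) (huv : u ≠ v) : ¬ Qrel p u v := by
  obtain ⟨i, j, k, hij, hik, hjk, rfl, hsep⟩ := ht
  obtain ⟨h1, h2, h3⟩ := (sepP_iff hp).mp hsep
  have h1' : ¬ Qrel p j i := fun h => h1 h.symm
  have h2' : ¬ Qrel p k i := fun h => h2 h.symm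
  have h3' : ¬ Qrel p k j := fun h => h3 h.symm
  simp only [Finset.mem_insert, Finset.mem_singleton] at hu hv
  rcases hu with rfl | rfl | rfl <;> rcases hv with rfl | rfl | rfl <;>
    first | exact absurd rfl huv | assumption

lemma card_of_mem_Sp {p : Set (Set α)} {t : Finset α} (ht : t ∈ Sp p) : t.card = 3 := by
  obtain ⟨i, j, k, hij, hik, hjk, rfl, -⟩ := ht
  rw [Finset.card_eq_three]
  exact ⟨i, j, k, hij, hik, hjk, rfl⟩

lemma mem_Sp_iff {p : Set (Set α)} (hp : Setoid.IsPartition p) {i j k : α}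
    (hij : i ≠ j) (hik : i ≠ k) (hjk : j ≠ k) :
    ({i, j, k} : Finset α) ∈ Sp p ↔ ¬ Qrel p i j ∧ ¬ Qrel p i k ∧ ¬ Qrel p j k := by
  constructor
  · intro ht
    exact ⟨pair_of_mem_Sp hp ht (by simp) (by simp) hij,
      pair_of_mem_Sp hp ht (by simp) (by simp) hik,
      pair_of_mem_Sp hp ht (by simp) (by simp) hjk⟩
  · intro h
    exact ⟨i, j, k, hij, hik, hjk, rfl, (sepP_iff hp).mpr h⟩

lemma triple_card_distinct {i j k : α} (h : ({i, j, k} : Finset α).card = 3) :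
    i ≠ j ∧ i ≠ k ∧ j ≠ k := by
  refine ⟨?_, ?_, ?_⟩
  · rintro rfl
    have he : ({i, i, k} : Finset α) = {i, k} := by ext x; simp
    rw [he] at h
    have := Finset.card_insert_le i ({k} : Finset α)
    simp at this; omega
  · rintro rfl
    have he : ({i, j, i} : Finset α) = {i, j} := by ext x; simp; tauto
    rw [he] at h
    have := Finset.card_insert_le i ({j} : Finset α)
    simp at this; omega
  · rintro rfl
    have he : ({i, j, j} : Finset α) = {i, j} := by ext x; simp
    rw [he] at h
    have := Finset.card_insert_le i ({j} : Finset α)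
    simp at this; omega

end Aux2

section Aux3

variable {α : Type*} [DecidableEq α]

lemma third_part {p : Set (Set α)} (hp : Setoid.IsPartition p) (hfin : p.Finite)
    (h3 : 3 ≤ p.ncard) {Bi Bj : Set α} (hBi : Bi ∈ p) (hBj : Bj ∈ p) :
    ∃ C ∈ p, C ≠ Bi ∧ C ≠ Bj := by
  by_contra h
  push_neg at h
  have hsub : p ⊆ {Bi, Bj} := by
    intro C hC
    by_cases h1 : C = Bi
    · exact Or.inl h1
    · exact Or.inr (h C hC h1)
  have := Set.ncard_le_ncard hsub (Set.toFinite _)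
  have h2 : ({Bi, Bj} : Set (Set α)).ncard ≤ 2 := by
    have := Set.ncard_insert_le Bi ({Bj} : Set (Set α))
    rw [Set.ncard_singleton] at this
    omega
  omega

lemma together_iff {p : Set (Set α)} (hp : Setoid.IsPartition p) (hfin : p.Finite)
    (h3 : 3 ≤ p.ncard) {i j : α} (hij : i ≠ j) :
    (∃ t ∈ Sp p, i ∈ t ∧ j ∈ t) ↔ ¬ Qrel p i j := by
  constructor
  · rintro ⟨t, ht, hi, hj⟩
    exact pair_of_mem_Sp hp ht hi hj hij
  · intro hQ
    obtain ⟨Bi, ⟨hBi, hiBi⟩, -⟩ := hp.2 i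
    obtain ⟨Bj, ⟨hBj, hjBj⟩, -⟩ := hp.2 j
    obtain ⟨C, hC, hCi, hCj⟩ := third_part hp hfin h3 hBi hBj
    have hCne : C.Nonempty := by
      rcases Set.eq_empty_or_nonempty C with rfl | h
      · exact absurd hC hp.1
      · exact h
    obtain ⟨k, hkC⟩ := hCne
    have hQik : ¬ Qrel p i k := by
      rintro ⟨B', hB', hiB', hkB'⟩
      exact hCi ((part_unique hp hC hkC hB' hkB').trans (part_unique hp hB' hiB' hBi hiBi))
    have hQjk : ¬ Qrel p j k := by
      rintro ⟨B', hB', hjB', hkB'⟩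
      exact hCj ((part_unique hp hC hkC hB' hkB').trans (part_unique hp hB' hjB' hBj hjBj))
    refine ⟨{i, j, k}, (mem_Sp_iff hp hij (Qrel.ne hp hQik) (Qrel.ne hp hQjk)).mpr
      ⟨hQ, hQik, hQjk⟩, by simp, by simp⟩

lemma adj_Sp_iff {p : Set (Set α)} (hp : Setoid.IsPartition p) (hfin : p.Finite)
    (h3 : 3 ≤ p.ncard) {i j : α} :
    (GS (Sp p)).Adj i j ↔ i ≠ j ∧ Qrel p i j := by
  rw [adj_iff]
  unfold Rrel
  constructor
  · rintro ⟨h1, h2⟩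
    refine ⟨h1, ?_⟩
    by_contra hQ
    exact h2 ((together_iff hp hfin h3 h1).mpr hQ)
  · rintro ⟨h1, h2⟩
    refine ⟨h1, fun h => ?_⟩
    exact (together_iff hp hfin h3 h1).mp h h2

lemma reach_Sp_iff {p : Set (Set α)} (hp : Setoid.IsPartition p) (hfin : p.Finite)
    (h3 : 3 ≤ p.ncard) {i j : α} :
    (GS (Sp p)).Reachable i j ↔ Qrel p i j := by
  constructor
  · intro h
    obtain ⟨w⟩ := h
    induction w with
    | nil => exact Qrel.refl hp _
    | cons h w ih => exact Qrel.trans hp ((adj_Sp_iff hp hfin h3).mp h).2 ih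
  · intro h
    by_cases hij : i = j
    · subst hij; exact SimpleGraph.Reachable.refl _
    · exact ((adj_Sp_iff hp hfin h3).mpr ⟨hij, h⟩).reachable

end Aux3


/-- for a diverse set `S` of triples, `p_S` has at least three parts and
the set of triples separated by `p_S` is exactly `S`; conversely, for any partition `p`
with at least three parts, the set `S_p` of triples separated by `p` is diverse and the
partition determined by the components of `G_{S_p}` is `p`. -/
theorem stmt19 {α : Type*} [Fintype α] [DecidableEq α] (hcard : 3 ≤ Fintype.card α) :
    (∀ S : Set (Finset α), Diverse S →
      3 ≤ (pS S).ncard ∧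
      ∀ i j k : α, i ≠ j → i ≠ k → j ≠ k →
        (({i, j, k} : Finset α) ∈ S ↔ Separates (pS S) i j k)) ∧
    (∀ p : Set (Set α), Setoid.IsPartition p → 3 ≤ p.ncard →
      Diverse (Sp p) ∧ pS (Sp p) = p) := by
  constructor
  · intro S hS
    obtain ⟨t0, ht0⟩ := hS.1
    obtain ⟨i0, j0, k0, h0ij, h0ik, h0jk, rfl⟩ := Finset.card_eq_three.mp (hS.2.1 t0 ht0)
    have hnE : ∀ {u v : α}, u ≠ v → Rrel S u v → ¬ Erel S u v := by
      rintro u v huv hR (rfl | h)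
      · exact huv rfl
      · exact h hR
    constructor
    · have hR0ij : Rrel S i0 j0 := ⟨_, ht0, by simp, by simp⟩
      have hR0ik : Rrel S i0 k0 := ⟨_, ht0, by simp, by simp⟩
      have hR0jk : Rrel S j0 k0 := ⟨_, ht0, by simp, by simp⟩
      have hsub : ({cls S i0, cls S j0, cls S k0} : Set (Set α)) ⊆ pS S := by
        rintro A hA
        simp only [Set.mem_insert_iff, Set.mem_singleton_iff] at hA
        rcases hA with rfl | rfl | rfl <;> exact cls_mem_pS _
      have h3 : ({cls S i0, cls S j0, cls S k0} : Set (Set α)).ncard = 3 :=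
        Set.ncard_eq_three.mpr ⟨_, _, _, cls_ne hS (hnE h0ij hR0ij),
          cls_ne hS (hnE h0ik hR0ik), cls_ne hS (hnE h0jk hR0jk), rfl⟩
      calc (3 : ℕ) = ({cls S i0, cls S j0, cls S k0} : Set (Set α)).ncard := h3.symm
        _ ≤ (pS S).ncard := Set.ncard_le_ncard hsub (Set.toFinite _)
    · intro i j k hij hik hjk
      constructor
      · intro hmem
        have hRij : Rrel S i j := ⟨_, hmem, by simp, by simp⟩
        have hRik : Rrel S i k := ⟨_, hmem, by simp, by simp⟩
        have hRjk : Rrel S j k := ⟨_, hmem, by simp, by simp⟩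
        exact ⟨cls S i, cls_mem_pS i, cls S j, cls_mem_pS j, cls S k, cls_mem_pS k,
          mem_cls_self i, mem_cls_self j, mem_cls_self k,
          cls_ne hS (hnE hij hRij), cls_ne hS (hnE hik hRik), cls_ne hS (hnE hjk hRjk)⟩
      · rintro ⟨A, ⟨a, rfl⟩, B, ⟨b, rfl⟩, D, ⟨d, rfl⟩, hiA, hjB, hkD, hAB, hAD, hBD⟩
        have hA : cls S a = cls S i := cls_eq hS ((reach_iff hS).mp hiA)
        have hB : cls S b = cls S j := cls_eq hS ((reach_iff hS).mp hjB)
        have hD : cls S d = cls S k := cls_eq hS ((reach_iff hS).mp hkD)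
        have hij' : cls S i ≠ cls S j := by rw [← hA, ← hB]; exact hAB
        have hik' : cls S i ≠ cls S k := by rw [← hA, ← hD]; exact hAD
        have hjk' : cls S j ≠ cls S k := by rw [← hB, ← hD]; exact hBD
        have hRij : Rrel S i j := by
          by_contra h; exact hij' (cls_eq hS (Or.inr h))
        have hRik : Rrel S i k := by
          by_contra h; exact hik' (cls_eq hS (Or.inr h))
        have hRjk : Rrel S j k := by
          by_contra h; exact hjk' (cls_eq hS (Or.inr h))
        obtain ⟨t1, h1, hi1, hj1⟩ := hRij
        obtain ⟨a1, rfl, -, -⟩ := third_elt (hS.2.1 t1 h1) hi1 hj1 hij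
        obtain ⟨t2, h2, hj2, hk2⟩ := hRjk
        obtain ⟨b1, rfl, -, -⟩ := third_elt (hS.2.1 t2 h2) hj2 hk2 hjk
        obtain ⟨t3, h3, hi3, hk3⟩ := hRik
        obtain ⟨c1, rfl, -, -⟩ := third_elt (hS.2.1 t3 h3) hi3 hk3 hik
        have e1 : ({a1, i, j} : Finset α) = {i, j, a1} := by ext x; simp; tauto
        have e2 : ({b1, j, k} : Finset α) = {j, k, b1} := by ext x; simp; tauto
        have e3 : ({c1, i, k} : Finset α) = {i, k, c1} := by ext x; simp; tauto
        exact hS.2.2.2 a1 b1 c1 i j k (by rw [e1]; exact h1) (by rw [e2]; exact h2)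
          (by rw [e3]; exact h3)
  · intro p hp h3
    have hfin : p.Finite := Set.toFinite p
    have hDiv : Diverse (Sp p) := by
      refine ⟨?_, fun t ht => card_of_mem_Sp ht, ?_, ?_⟩
      · obtain ⟨A, hA, B, hB, C, hC, hAB, hAC, hBC⟩ := (Set.two_lt_ncard hfin).mp (by omega)
        obtain ⟨a, ha⟩ := Set.nonempty_iff_ne_empty.mpr (fun h => hp.1 (h ▸ hA))
        obtain ⟨b, hb⟩ := Set.nonempty_iff_ne_empty.mpr (fun h => hp.1 (h ▸ hB))
        obtain ⟨c, hc⟩ := Set.nonempty_iff_ne_empty.mpr (fun h => hp.1 (h ▸ hC))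
        have hab : a ≠ b := by rintro rfl; exact hAB (part_unique hp hA ha hB hb)
        have hac : a ≠ c := by rintro rfl; exact hAC (part_unique hp hA ha hC hc)
        have hbc : b ≠ c := by rintro rfl; exact hBC (part_unique hp hB hb hC hc)
        exact ⟨{a, b, c}, a, b, c, hab, hac, hbc, rfl,
          ⟨A, hA, B, hB, C, hC, ha, hb, hc, hAB, hAC, hBC⟩⟩
      · intro i j k l hmem
        obtain ⟨hij, hik, hjk⟩ := triple_card_distinct (card_of_mem_Sp hmem)
        obtain ⟨hQij, hQik, hQjk⟩ := (mem_Sp_iff hp hij hik hjk).mp hmem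
        by_cases hQil : Qrel p i l
        · have hQjl : ¬ Qrel p j l := fun h => hQij (Qrel.trans hp hQil h.symm)
          have hQkl : ¬ Qrel p k l := fun h => hQik (Qrel.trans hp hQil h.symm)
          exact Or.inr (Or.inr ((mem_Sp_iff hp hjk (Qrel.ne hp hQjl)
            (Qrel.ne hp hQkl)).mpr ⟨hQjk, hQjl, hQkl⟩))
        · by_cases hQjl : Qrel p j l
          · have hQkl : ¬ Qrel p k l := fun h => hQjk (Qrel.trans hp hQjl h.symm)
            exact Or.inr (Or.inl ((mem_Sp_iff hp hik (Qrel.ne hp hQil)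
              (Qrel.ne hp hQkl)).mpr ⟨hQik, hQil, hQkl⟩))
          · exact Or.inl ((mem_Sp_iff hp hij (Qrel.ne hp hQil)
              (Qrel.ne hp hQjl)).mpr ⟨hQij, hQil, hQjl⟩)
      · intro a b c x y z h1 h2 h3'
        have hxy := (triple_card_distinct (card_of_mem_Sp h1)).2.2
        have hyz := (triple_card_distinct (card_of_mem_Sp h2)).2.2
        have hxz := (triple_card_distinct (card_of_mem_Sp h3')).2.2
        have hQxy := pair_of_mem_Sp hp h1 (by simp) (by simp) hxy
        have hQyz := pair_of_mem_Sp hp h2 (by simp) (by simp) hyz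
        have hQxz := pair_of_mem_Sp hp h3' (by simp) (by simp) hxz
        exact (mem_Sp_iff hp hxy hxz hyz).mpr ⟨hQxy, hQxz, hQyz⟩
    refine ⟨hDiv, ?_⟩
    ext A
    constructor
    · rintro ⟨i, rfl⟩
      obtain ⟨B, ⟨hB, hiB⟩, -⟩ := hp.2 i
      have heq : {j : α | (GS (Sp p)).Reachable i j} = B := by
        ext x
        simp only [Set.mem_setOf_eq, reach_Sp_iff hp hfin h3]
        constructor
        · rintro ⟨C, hC, hiC, hxC⟩
          rwa [part_unique hp hC hiC hB hiB] at hxC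
        · intro hx; exact ⟨B, hB, hiB, hx⟩
      rw [heq]; exact hB
    · intro hA
      obtain ⟨i, hiA⟩ := Set.nonempty_iff_ne_empty.mpr (fun h => hp.1 (h ▸ hA))
      refine ⟨i, ?_⟩
      ext x
      simp only [Set.mem_setOf_eq, reach_Sp_iff hp hfin h3]
      constructor
      · intro hx; exact ⟨A, hA, hiA, hx⟩
      · rintro ⟨C, hC, hiC, hxC⟩
        rwa [part_unique hp hC hiC hA hiA] at hxC
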